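/- The antipode identity in the stuffle Hopf algebra: in the quasi-shuffle (stuffle) algebra on the alphabet {z_k : k ≥ 1} with deconcatenation coproduct, for any nonempty word w = z_{k₁}⋯z_{k_j}, one has ∑_{i=0}^{j} (-1)^i · ζ^⋆-word(z_{k₁}⋯z_{k_i}) * (reversal word z_{k_j}⋯z_{k_{i+1}}) = 0, where ζ^⋆-word denotes the image under the map sending a word to the sum over all ways of contracting adjacent letters z_a z_b ↦ z_{a+b}. -/

import Mathlib

open scoped BigOperators

/-- The stuffle (quasi-shuffle) product of two words, as a multiset of words. -/
def stuffle : List ℕ → List ℕ → Multiset (List ℕ)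
  | [], v => {v}
  | u, [] => {u}
  | a :: u, b :: v =>
      (stuffle u (b :: v)).map (a :: ·) + (stuffle (a :: u) v).map (b :: ·) +
        (stuffle u v).map ((a + b) :: ·)
  termination_by u v => u.length + v.length

/-- All contractions of a word: the results of replacing each comma by `,` or `+`
(contracting adjacent letters `z_a z_b ↦ z_{a+b}`). -/
def contractions : List ℕ → Multiset (List ℕ)
  | [] => {[]}
  | [a] => {[a]}
  | a :: b :: t => (contractions (b :: t)).map (a :: ·) + contractions ((a + b) :: t)
  termination_by l => l.length

/-- The bilinear extension of the stuffle product to the quasi-shuffle algebra,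
realized as the ℚ-vector space `List ℕ →₀ ℚ` spanned by words. -/
noncomputable def qsMul (x y : List ℕ →₀ ℚ) : List ℕ →₀ ℚ :=
  x.sum fun u a => y.sum fun v b =>
    (a * b) • ((stuffle u v).map fun w => Finsupp.single w (1 : ℚ)).sum

/-- The element `ζ^⋆`-word of `u`: the sum of all contractions of `u`. -/
noncomputable def starWord (u : List ℕ) : List ℕ →₀ ℚ :=
  ((contractions u).map fun w => Finsupp.single w (1 : ℚ)).sum

noncomputable def T (u v : List ℕ) : List ℕ →₀ ℚ :=
  ((stuffle u v).map fun w => Finsupp.single w (1 : ℚ)).sum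

noncomputable def La (a : ℕ) : (List ℕ →₀ ℚ) →ₗ[ℚ] (List ℕ →₀ ℚ) :=
  Finsupp.lmapDomain ℚ ℚ (a :: ·)

noncomputable def B : (List ℕ →₀ ℚ) →ₗ[ℚ] (List ℕ →₀ ℚ) →ₗ[ℚ] (List ℕ →₀ ℚ) :=
  Finsupp.lift _ ℚ _ fun u => Finsupp.lift _ ℚ _ fun v => T u v

lemma qsMul_eq (x y : List ℕ →₀ ℚ) : qsMul x y = B x y := by
  simp [B, qsMul, T, Finsupp.lift_apply, Finsupp.sum_apply', mul_smul, Finsupp.smul_sum]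

lemma La_single (a : ℕ) (w : List ℕ) : La a (Finsupp.single w (1:ℚ)) = Finsupp.single (a::w) 1 := by
  simp [La, Finsupp.mapDomain_single]

lemma B_single_single (u v : List ℕ) :
    B (Finsupp.single u 1) (Finsupp.single v 1) = T u v := by
  simp [B, Finsupp.lift_apply, Finsupp.sum_single_index]

lemma sum_map_cons (a : ℕ) (M : Multiset (List ℕ)) :
    ((M.map (a :: ·)).map fun w => Finsupp.single w (1:ℚ)).sum
      = La a ((M.map fun w => Finsupp.single w (1:ℚ)).sum) := by
  rw [map_multiset_sum, Multiset.map_map, Multiset.map_map]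
  exact congrArg _ (Multiset.map_congr rfl fun w _ => (La_single a w).symm)

lemma T_nil_right (u : List ℕ) : T u [] = Finsupp.single u 1 := by
  cases u <;> simp [T, stuffle]

lemma T_nil_left (v : List ℕ) : T [] v = Finsupp.single v 1 := by
  simp [T, stuffle]

lemma T_cons_cons (a b : ℕ) (u v : List ℕ) :
    T (a::u) (b::v) = La a (T u (b::v)) + La b (T (a::u) v) + La (a+b) (T u v) := by
  rw [T, stuffle]
  simp only [Multiset.map_add, Multiset.sum_add, sum_map_cons]
  rfl

lemma smul_single_one' (u : List ℕ) (r : ℚ) :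
    Finsupp.single u r = r • Finsupp.single u (1:ℚ) := by
  simp [Finsupp.smul_single]

lemma B_nil_right (x : List ℕ →₀ ℚ) : B x (Finsupp.single [] 1) = x := by
  induction x using Finsupp.induction_linear with
  | zero => simp
  | add f g hf hg => rw [map_add, LinearMap.add_apply, hf, hg]
  | single u r =>
      rw [smul_single_one' u r, map_smul, LinearMap.smul_apply, B_single_single, T_nil_right,
        ← smul_single_one']

lemma B_nil_left (y : List ℕ →₀ ℚ) : B (Finsupp.single [] 1) y = y := by
  induction y using Finsupp.induction_linear with
  | zero => simp
  | add f g hf hg => rw [map_add, hf, hg]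
  | single v r =>
      rw [smul_single_one' v r, map_smul, B_single_single, T_nil_left, ← smul_single_one']

lemma starW_nil : starWord [] = Finsupp.single [] 1 := by simp [starWord, contractions]

lemma starW_one (a : ℕ) : starWord [a] = Finsupp.single [a] 1 := by
  simp [starWord, contractions]

lemma star_cons_cons (a b : ℕ) (t : List ℕ) :
    starWord (a::b::t) = La a (starWord (b::t)) + starWord ((a+b)::t) := by
  rw [starWord, contractions]
  simp only [Multiset.map_add, Multiset.sum_add, sum_map_cons]
  rfl

lemma Hlem (a c : ℕ) (v : List ℕ) (x : List ℕ →₀ ℚ) :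
    B (La a x) (Finsupp.single (c::v) 1)
      = La a (B x (Finsupp.single (c::v) 1)) + La c (B (La a x) (Finsupp.single v 1))
        + La (a+c) (B x (Finsupp.single v 1)) := by
  induction x using Finsupp.induction_linear with
  | zero => simp
  | add f g hf hg =>
      rw [map_add, map_add, LinearMap.add_apply, LinearMap.add_apply, hf, hg]
      simp only [map_add, LinearMap.add_apply]
      abel
  | single u r =>
      rw [smul_single_one' u r]
      simp only [map_smul, LinearMap.smul_apply, ← smul_add]
      congr 1
      rw [La_single, B_single_single, B_single_single, B_single_single, B_single_single]
      exact T_cons_cons a c u v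

noncomputable def F (k : List ℕ) : List ℕ →₀ ℚ :=
  ∑ i ∈ Finset.range (k.length + 1),
    (-1 : ℚ) ^ i • B (starWord (k.take i)) (Finsupp.single ((k.drop i).reverse) 1)

noncomputable def G (a : ℕ) (t : List ℕ) : List ℕ →₀ ℚ :=
  ∑ m ∈ Finset.range (t.length + 1),
    (-1 : ℚ) ^ m • B (La a (starWord (t.take m))) (Finsupp.single ((t.drop m).reverse) 1)

noncomputable def gx (a : ℕ) : List ℕ → (List ℕ →₀ ℚ)
  | [] => 0
  | b :: t' => Finsupp.single (t'.reverse ++ [a+b]) 1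

lemma F_nil : F [] = Finsupp.single [] 1 := by
  simp [F, starW_nil, B_nil_left]

lemma Glem (a : ℕ) (t : List ℕ) :
    (∀ k : List ℕ, k ≠ [] → k.length ≤ t.length → F k = 0) →
    G a t = Finsupp.single (t.reverse ++ [a]) 1 + gx a t := by
  induction t using List.reverseRecOn with
  | nil =>
      intro _
      simp [G, gx, starW_nil, La_single, B_nil_right]
  | append_singleton s c ih =>
      intro HF
      have hlen : (s ++ [c]).length = s.length + 1 := by simp
      have hsum : G a (s ++ [c]) =
          (∑ m ∈ Finset.range (s.length + 1),
            (-1 : ℚ) ^ m • B (La a (starWord (s.take m)))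
              (Finsupp.single (c :: (s.drop m).reverse) 1))
          + (-1 : ℚ) ^ (s.length + 1) • La a (starWord (s ++ [c])) := by
        rw [G, hlen, Finset.sum_range_succ]
        congr 1
        · refine Finset.sum_congr rfl fun m hm => ?_
          have hm' : m ≤ s.length := Nat.lt_succ_iff.mp (Finset.mem_range.mp hm)
          rw [List.take_append_of_le_length hm', List.drop_append_of_le_length hm']
          simp
        · rw [List.take_of_length_le hlen.le, List.drop_of_length_le hlen.le]
          simp [B_nil_right]
      have hterm : ∀ m ∈ Finset.range (s.length + 1),
          (-1 : ℚ) ^ m • B (La a (starWord (s.take m)))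
              (Finsupp.single (c :: (s.drop m).reverse) 1)
          = (-1 : ℚ) ^ m • La a (B (starWord (s.take m)) (Finsupp.single (c :: (s.drop m).reverse) 1))
            + (-1 : ℚ) ^ m • La c (B (La a (starWord (s.take m))) (Finsupp.single ((s.drop m).reverse) 1))
            + (-1 : ℚ) ^ m • La (a+c) (B (starWord (s.take m)) (Finsupp.single ((s.drop m).reverse) 1)) := by
        intro m _
        rw [Hlem, smul_add, smul_add]
      rw [Finset.sum_congr rfl hterm, Finset.sum_add_distrib, Finset.sum_add_distrib] at hsum
      have h2 : (∑ m ∈ Finset.range (s.length + 1),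
          (-1 : ℚ) ^ m • La c (B (La a (starWord (s.take m))) (Finsupp.single ((s.drop m).reverse) 1)))
          = La c (G a s) := by
        rw [G, map_sum]
        exact Finset.sum_congr rfl fun m _ => (map_smul _ _ _).symm
      have h3 : (∑ m ∈ Finset.range (s.length + 1),
          (-1 : ℚ) ^ m • La (a+c) (B (starWord (s.take m)) (Finsupp.single ((s.drop m).reverse) 1)))
          = La (a+c) (F s) := by
        rw [F, map_sum]
        exact Finset.sum_congr rfl fun m _ => (map_smul _ _ _).symm
      have h1 : (∑ m ∈ Finset.range (s.length + 1),
          (-1 : ℚ) ^ m • La a (B (starWord (s.take m)) (Finsupp.single (c :: (s.drop m).reverse) 1)))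
          + (-1 : ℚ) ^ (s.length + 1) • La a (starWord (s ++ [c]))
          = La a (F (s ++ [c])) := by
        conv_rhs => rw [F, hlen, Finset.sum_range_succ, map_add, map_sum]
        congr 1
        · refine Finset.sum_congr rfl fun m hm => ?_
          have hm' : m ≤ s.length := Nat.lt_succ_iff.mp (Finset.mem_range.mp hm)
          rw [List.take_append_of_le_length hm', List.drop_append_of_le_length hm']
          simp [map_smul]
        · rw [List.take_of_length_le hlen.le, List.drop_of_length_le hlen.le]
          simp [B_nil_right, map_smul]
      have hF : F (s ++ [c]) = 0 := HF (s ++ [c]) (by simp) le_rfl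
      have HFs : ∀ k : List ℕ, k ≠ [] → k.length ≤ s.length → F k = 0 := fun k ha hb =>
        HF k ha (by omega)
      calc G a (s ++ [c])
          = ((∑ m ∈ Finset.range (s.length + 1),
              (-1 : ℚ) ^ m • La a (B (starWord (s.take m)) (Finsupp.single (c :: (s.drop m).reverse) 1)))
            + (-1 : ℚ) ^ (s.length + 1) • La a (starWord (s ++ [c])))
            + (∑ m ∈ Finset.range (s.length + 1),
              (-1 : ℚ) ^ m • La c (B (La a (starWord (s.take m))) (Finsupp.single ((s.drop m).reverse) 1)))
            + (∑ m ∈ Finset.range (s.length + 1),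
              (-1 : ℚ) ^ m • La (a+c) (B (starWord (s.take m)) (Finsupp.single ((s.drop m).reverse) 1))) := by
            rw [hsum]; abel
        _ = La a (F (s ++ [c])) + La c (G a s) + La (a+c) (F s) := by rw [h1, h2, h3]
        _ = Finsupp.single ((s ++ [c]).reverse ++ [a]) 1 + gx a (s ++ [c]) := by
            rw [hF, map_zero, zero_add, ih HFs]
            cases s with
            | nil => rw [F_nil]; simp [gx, La_single, map_add]
            | cons b s' =>
                rw [HFs (b :: s') (by simp) le_rfl, map_zero, add_zero, map_add, La_single]
                rw [show gx a (b :: s') = Finsupp.single (s'.reverse ++ [a+b]) 1 from rfl, La_single]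
                simp [gx]

lemma Fzero : ∀ (n : ℕ) (k : List ℕ), k ≠ [] → k.length = n → F k = 0 := by
  intro n
  induction n using Nat.strong_induction_on with
  | _ n IH =>
    intro k hk hlen
    match k with
    | [a] =>
        simp [F, Finset.sum_range_succ, starW_nil, starW_one, B_nil_left, B_nil_right]
    | a :: b :: t' =>
        simp only [List.length_cons] at hlen
        have hk' : F ((a+b) :: t') = 0 :=
          IH ((a+b)::t').length (by simp; omega) _ (by simp) rfl
        have HFle : ∀ k0 : List ℕ, k0 ≠ [] → k0.length ≤ (b::t').length → F k0 = 0 :=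
          fun k0 h0 hl => IH k0.length
            (by simp only [List.length_cons] at hl; omega) k0 h0 rfl
        have hG : G a (b::t')
            = Finsupp.single ((b::t').reverse ++ [a]) 1
              + Finsupp.single (t'.reverse ++ [a+b]) 1 :=
          Glem a (b::t') HFle
        have e1 : F (a::b::t') =
            (∑ m ∈ Finset.range (t'.length + 2),
              (-1:ℚ)^(m+1) • B (starWord (a :: (b::t').take m))
                (Finsupp.single (((b::t').drop m).reverse) 1))
            + Finsupp.single ((a::b::t').reverse) 1 := by
          rw [F]
          simp only [List.length_cons]
          rw [Finset.sum_range_succ']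
          congr 1
          simp [starW_nil, B_nil_left]
        have hsplitm : ∀ m ∈ Finset.range (t'.length + 2),
            (-1:ℚ)^(m+1) • B (starWord (a :: (b::t').take m))
              (Finsupp.single (((b::t').drop m).reverse) 1)
            = -((-1:ℚ)^m • B (La a (starWord ((b::t').take m)))
                (Finsupp.single (((b::t').drop m).reverse) 1))
              + -((-1:ℚ)^m • B (if m = 0 then 0 else starWord (((a+b)::t').take m))
                (Finsupp.single (((b::t').drop m).reverse) 1)) := by
          intro m _
          have hstar : starWord (a :: (b::t').take m)
              = La a (starWord ((b::t').take m))
                + (if m = 0 then 0 else starWord (((a+b)::t').take m)) := by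
            cases m with
            | zero => simp [starW_one, starW_nil, La_single]
            | succ m' =>
                rw [List.take_succ_cons, star_cons_cons, if_neg (Nat.succ_ne_zero m'), List.take_succ_cons]
          rw [hstar, pow_succ, mul_neg_one, neg_smul, map_add, LinearMap.add_apply, smul_add,
            neg_add]
        have hGa : (∑ m ∈ Finset.range (t'.length + 2),
            (-1:ℚ)^m • B (La a (starWord ((b::t').take m)))
              (Finsupp.single (((b::t').drop m).reverse) 1)) = G a (b::t') := by
          rw [G]
          simp only [List.length_cons]
        have hD : (∑ m ∈ Finset.range (t'.length + 2),
            (-1:ℚ)^m • B (if m = 0 then 0 else starWord (((a+b)::t').take m))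
              (Finsupp.single (((b::t').drop m).reverse) 1))
            = F ((a+b)::t') - Finsupp.single (((a+b)::t').reverse) 1 := by
          rw [F]
          simp only [List.length_cons]
          conv_lhs => rw [Finset.sum_range_succ']
          conv_rhs => rw [Finset.sum_range_succ']
          simp [starW_nil, B_nil_left]
        rw [e1, Finset.sum_congr rfl hsplitm, Finset.sum_add_distrib]
        rw [Finset.sum_neg_distrib, Finset.sum_neg_distrib, hGa, hD, hG, hk']
        simp only [List.reverse_cons]
        abel


/-- The antipode identity in the stuffle Hopf algebra: for any nonempty word
`w = z_{k₁}⋯z_{k_j}`,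
`∑_{i=0}^{j} (-1)^i · (ζ^⋆-word of z_{k₁}⋯z_{k_i}) * (z_{k_j}⋯z_{k_{i+1}}) = 0`. -/
theorem antipode_identity_algebra (k : List ℕ) (hne : k ≠ []) (hk : ∀ i ∈ k, 0 < i) :
    ∑ i ∈ Finset.range (k.length + 1),
      (-1 : ℚ) ^ i • qsMul (starWord (k.take i)) (Finsupp.single ((k.drop i).reverse) 1)
      = 0 := by
  have h := Fzero k.length k hne rfl
  rw [F] at h
  simpa only [qsMul_eq] using h
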